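/- Iterated Duhamel representation (Theorem 3.1). Assume that for every integer k with 0 ≤ k ≤ K−1 the one-step Duhamel relations hold: ψ(t_{k+1}) = cos(hG) ψ(t_k) + G⁻¹ sin(hG) φ(t_k) + ∫₀ʰ G⁻¹ sin((h−τ)G) (m(t_k+τ) (ψ(t_k+τ))) dτ and φ(t_{k+1}) = −G sin(hG) ψ(t_k) + cos(hG) φ(t_k) + ∫₀ʰ cos((h−τ)G) (m(t_k+τ) (ψ(t_k+τ))) dτ. Then for every integer k with 1 ≤ k ≤ K one has ψ(t_k) = cos(khG) ψ(t₀) + G⁻¹ sin(khG) φ(t₀) + Σ_{l=0}^{k−1} ∫₀ʰ G⁻¹ sin(((k−l)h−τ)G) (m(t_l+τ) (ψ(t_l+τ))) dτ and φ(t_k) = −G sin(khG) ψ(t₀) + cos(khG) φ(t₀) + Σ_{l=0}^{k−1} ∫₀ʰ cos(((k−l)h−τ)G) (m(t_l+τ) (ψ(t_l+τ))) dτ. -/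

import Mathlib

set_option linter.unusedSectionVars false
set_option linter.unreachableTactic false
set_option linter.unusedTactic false
set_option maxHeartbeats 1000000
open NormedSpace


/-- `cos(tG) := (exp(itG) + exp(−itG))/2` in a complex unital Banach algebra. -/
noncomputable def opCos {A : Type*} [NormedRing A] [NormedAlgebra ℂ A] (t : ℝ) (G : A) : A :=
  (2 : ℂ)⁻¹ • (NormedSpace.exp (((t : ℂ) * Complex.I) • G) +
    NormedSpace.exp ((-(t : ℂ) * Complex.I) • G))

/-- `sin(tG) := (exp(itG) − exp(−itG))/(2i)` in a complex unital Banach algebra. -/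
noncomputable def opSin {A : Type*} [NormedRing A] [NormedAlgebra ℂ A] (t : ℝ) (G : A) : A :=
  (2 * Complex.I)⁻¹ • (NormedSpace.exp (((t : ℂ) * Complex.I) • G) -
    NormedSpace.exp ((-(t : ℂ) * Complex.I) • G))

section ops
variable {A : Type*} [NormedRing A] [NormedAlgebra ℂ A] [CompleteSpace A]

lemma exp_smul_add' (a b : ℂ) (G : A) :
    exp ((a + b) • G) = exp (a • G) * exp (b • G) := by
  rw [add_smul]
  let +nondep : NormedAlgebra ℚ A := .restrictScalars ℚ ℂ A
  exact exp_add_of_commute (((Commute.refl G).smul_left a).smul_right b)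

lemma opCos_add (s t : ℝ) (G : A) :
    opCos (s + t) G = opCos s G * opCos t G - opSin s G * opSin t G := by
  have h1 : ((((s:ℝ) + t : ℝ) : ℂ) * Complex.I) = (s : ℂ) * Complex.I + (t : ℂ) * Complex.I := by
    push_cast; ring
  have h2 : (-(((s:ℝ) + t : ℝ) : ℂ) * Complex.I) = -(s : ℂ) * Complex.I + -(t : ℂ) * Complex.I := by
    push_cast; ring
  simp only [opCos, opSin, h1, h2, exp_smul_add']
  simp only [smul_mul_smul_comm, mul_add, add_mul, mul_sub, sub_mul]
  match_scalars <;> simp [div_eq_iff, Complex.I_ne_zero] <;> ring_nf <;> simp [Complex.I_sq] <;> try ring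

lemma opSin_add (s t : ℝ) (G : A) :
    opSin (s + t) G = opSin s G * opCos t G + opCos s G * opSin t G := by
  have h1 : ((((s:ℝ) + t : ℝ) : ℂ) * Complex.I) = (s : ℂ) * Complex.I + (t : ℂ) * Complex.I := by
    push_cast; ring
  have h2 : (-(((s:ℝ) + t : ℝ) : ℂ) * Complex.I) = -(s : ℂ) * Complex.I + -(t : ℂ) * Complex.I := by
    push_cast; ring
  simp only [opCos, opSin, h1, h2, exp_smul_add']
  simp only [smul_mul_smul_comm, mul_add, add_mul, mul_sub, sub_mul]
  match_scalars <;> simp [div_eq_iff, Complex.I_ne_zero] <;> ring_nf <;> simp [Complex.I_sq] <;> try ring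

end ops

section comm
variable {A : Type*} [NormedRing A] [NormedAlgebra ℂ A] [CompleteSpace A]
variable {G Ginv : A} (hGr : G * Ginv = 1) (hGl : Ginv * G = 1)
include hGr hGl

lemma commute_Ginv_G : Commute Ginv G := by
  unfold Commute SemiconjBy; rw [hGl, hGr]

lemma commute_Ginv_opCos (t : ℝ) : Commute Ginv (opCos t G) := by
  unfold opCos
  exact (((((commute_Ginv_G hGr hGl).smul_right _).exp_right).add_right
    (((commute_Ginv_G hGr hGl).smul_right _).exp_right))).smul_right _

lemma commute_Ginv_opSin (t : ℝ) : Commute Ginv (opSin t G) := by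
  unfold opSin
  exact (((((commute_Ginv_G hGr hGl).smul_right _).exp_right).sub_right
    (((commute_Ginv_G hGr hGl).smul_right _).exp_right))).smul_right _

omit hGr hGl in
lemma commute_G_opCos (t : ℝ) : Commute G (opCos t G) := by
  unfold opCos
  exact ((((Commute.refl G).smul_right _).exp_right).add_right
    (((Commute.refl G).smul_right _).exp_right)).smul_right _

omit hGr hGl in
lemma commute_G_opSin (t : ℝ) : Commute G (opSin t G) := by
  unfold opSin
  exact ((((Commute.refl G).smul_right _).exp_right).sub_right
    (((Commute.refl G).smul_right _).exp_right)).smul_right _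

lemma keyK1 (a b : ℝ) :
    opCos a G * opCos b G - Ginv * (opSin a G * (G * opSin b G)) = opCos (a + b) G := by
  have h1 : Ginv * (opSin a G * (G * opSin b G)) = opSin a G * opSin b G := by
    rw [← mul_assoc, (commute_Ginv_opSin hGr hGl a).eq, mul_assoc (opSin a G), ← mul_assoc Ginv,
      hGl, one_mul]
  rw [h1, opCos_add]

lemma keyK2 (a b : ℝ) :
    opCos a G * (Ginv * opSin b G) + Ginv * (opSin a G * opCos b G) = Ginv * opSin (a + b) G := by
  have h1 : opCos a G * (Ginv * opSin b G) = Ginv * (opCos a G * opSin b G) := by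
    rw [← mul_assoc, ← (commute_Ginv_opCos hGr hGl a).eq, mul_assoc]
  rw [h1, ← mul_add, opSin_add, add_comm]

omit hGr hGl in
lemma keyK4 (a b : ℝ) :
    -(G * (opSin a G * opCos b G)) + opCos a G * -(G * opSin b G) = -(G * opSin (a + b) G) := by
  have h1 : opCos a G * -(G * opSin b G) = -(G * (opCos a G * opSin b G)) := by
    rw [mul_neg, ← mul_assoc, ← (commute_G_opCos (G := G) a).eq, mul_assoc]
  rw [h1, ← neg_add, ← mul_add, opSin_add]

lemma keyK5 (a b : ℝ) :
    -(G * (opSin a G * (Ginv * opSin b G))) + opCos a G * opCos b G = opCos (a + b) G := by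
  have h1 : G * (opSin a G * (Ginv * opSin b G)) = opSin a G * opSin b G := by
    rw [← mul_assoc, (commute_G_opSin (G := G) a).eq, mul_assoc (opSin a G), ← mul_assoc G,
      hGr, one_mul]
  rw [h1, opCos_add]; abel

end comm

section cont
variable {A : Type*} [NormedRing A] [NormedAlgebra ℂ A] [CompleteSpace A] (G : A)

lemma continuous_opCos : Continuous fun t : ℝ => opCos t G := by
  unfold opCos
  let +nondep : NormedAlgebra ℚ A := .restrictScalars ℚ ℂ A
  exact ((exp_continuous.comp (by fun_prop)).add (exp_continuous.comp (by fun_prop))).const_smul _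

lemma continuous_opSin : Continuous fun t : ℝ => opSin t G := by
  unfold opSin
  let +nondep : NormedAlgebra ℚ A := .restrictScalars ℚ ℂ A
  exact ((exp_continuous.comp (by fun_prop)).sub (exp_continuous.comp (by fun_prop))).const_smul _

end cont

/-- **Theorem 3.1, iterated Duhamel representation.**
If the one-step Duhamel relations hold for `0 ≤ k ≤ K−1`, then for every `1 ≤ k ≤ K`
the iterated representation holds, for both `ψ` and `φ`. -/
theorem iterated_duhamel_representation
    {E : Type*} [NormedAddCommGroup E] [NormedSpace ℂ E] [CompleteSpace E]
    (G Ginv : E →L[ℂ] E) (hGr : G * Ginv = 1) (hGl : Ginv * G = 1)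
    (t₀ h : ℝ) (hh : 0 < h) (K : ℕ) (hK : 1 ≤ K)
    (m : ℝ → (E →L[ℂ] E)) (hm : Continuous m)
    (ψ φ : ℝ → E) (hψ : Continuous ψ) (hφ : Continuous φ)
    (hstepψ : ∀ k : ℕ, k ≤ K - 1 →
      ψ (t₀ + ((k : ℝ) + 1) * h) =
        opCos h G (ψ (t₀ + k * h)) + Ginv (opSin h G (φ (t₀ + k * h))) +
          ∫ τ in (0:ℝ)..h,
            Ginv (opSin (h - τ) G (m (t₀ + k * h + τ) (ψ (t₀ + k * h + τ)))))
    (hstepφ : ∀ k : ℕ, k ≤ K - 1 →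
      φ (t₀ + ((k : ℝ) + 1) * h) =
        -(G (opSin h G (ψ (t₀ + k * h)))) + opCos h G (φ (t₀ + k * h)) +
          ∫ τ in (0:ℝ)..h,
            opCos (h - τ) G (m (t₀ + k * h + τ) (ψ (t₀ + k * h + τ)))) :
    ∀ k : ℕ, 1 ≤ k → k ≤ K →
      (ψ (t₀ + k * h) =
        opCos (k * h) G (ψ t₀) + Ginv (opSin (k * h) G (φ t₀)) +
          ∑ l ∈ Finset.range k,
            ∫ τ in (0:ℝ)..h,
              Ginv (opSin (((k : ℝ) - l) * h - τ) G
                (m (t₀ + l * h + τ) (ψ (t₀ + l * h + τ))))) ∧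
      (φ (t₀ + k * h) =
        -(G (opSin (k * h) G (ψ t₀))) + opCos (k * h) G (φ t₀) +
          ∑ l ∈ Finset.range k,
            ∫ τ in (0:ℝ)..h,
              opCos (((k : ℝ) - l) * h - τ) G
                (m (t₀ + l * h + τ) (ψ (t₀ + l * h + τ)))) := by
  have hfc : ∀ l : ℕ, Continuous (fun τ : ℝ => m (t₀ + l * h + τ) (ψ (t₀ + l * h + τ))) := by
    intro l
    exact (hm.comp (by fun_prop)).clm_apply (hψ.comp (by fun_prop))
  have hSinCont : ∀ (c : ℝ) (l : ℕ),
      Continuous (fun τ : ℝ => Ginv (opSin (c - τ) G (m (t₀ + l * h + τ) (ψ (t₀ + l * h + τ))))) := by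
    intro c l
    exact Ginv.continuous.comp (((continuous_opSin G).comp (by fun_prop)).clm_apply (hfc l))
  have hCosCont : ∀ (c : ℝ) (l : ℕ),
      Continuous (fun τ : ℝ => opCos (c - τ) G (m (t₀ + l * h + τ) (ψ (t₀ + l * h + τ)))) := by
    intro c l
    exact ((continuous_opCos G).comp (by fun_prop)).clm_apply (hfc l)
  have hSinInt : ∀ (c : ℝ) (l : ℕ),
      IntervalIntegrable (fun τ : ℝ => Ginv (opSin (c - τ) G
        (m (t₀ + l * h + τ) (ψ (t₀ + l * h + τ))))) MeasureTheory.volume 0 h :=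
    fun c l => (hSinCont c l).intervalIntegrable _ _
  have hCosInt : ∀ (c : ℝ) (l : ℕ),
      IntervalIntegrable (fun τ : ℝ => opCos (c - τ) G
        (m (t₀ + l * h + τ) (ψ (t₀ + l * h + τ)))) MeasureTheory.volume 0 h :=
    fun c l => (hCosCont c l).intervalIntegrable _ _
  intro k hk1
  induction k, hk1 using Nat.le_induction with
  | base =>
    intro _
    have h0ψ := hstepψ 0 (by omega)
    have h0φ := hstepφ 0 (by omega)
    constructor
    · simpa [Finset.sum_range_one] using h0ψ
    · simpa [Finset.sum_range_one] using h0φ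
  | succ n hn ih =>
    intro hn1K
    obtain ⟨ihψ, ihφ⟩ := ih (by omega)
    have hstψ := hstepψ n (by omega)
    have hstφ := hstepφ n (by omega)
    rw [ihψ, ihφ] at hstψ hstφ
    -- vector-level combination identities
    have Eψ0 : opCos h G (opCos (↑n * h) G (ψ t₀)) -
        Ginv (opSin h G (G (opSin (↑n * h) G (ψ t₀)))) = opCos ((↑n + 1) * h) G (ψ t₀) := by
      have hK := keyK1 hGr hGl h (↑n * h)
      rw [show h + ↑n * h = ((n:ℝ) + 1) * h by ring] at hK
      have := congrArg (fun L : E →L[ℂ] E => L (ψ t₀)) hK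
      simpa [ContinuousLinearMap.sub_apply, ContinuousLinearMap.mul_apply] using this
    have V2 : ∀ (σ : ℝ) (y : E), opCos h G (Ginv (opSin σ G y)) +
        Ginv (opSin h G (opCos σ G y)) = Ginv (opSin (h + σ) G y) := by
      intro σ y
      have := congrArg (fun L : E →L[ℂ] E => L y) (keyK2 hGr hGl h σ)
      simpa [ContinuousLinearMap.add_apply, ContinuousLinearMap.mul_apply] using this
    have V5 : ∀ (σ : ℝ) (y : E), -(G (opSin h G (Ginv (opSin σ G y)))) +
        opCos h G (opCos σ G y) = opCos (h + σ) G y := by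
      intro σ y
      have := congrArg (fun L : E →L[ℂ] E => L y) (keyK5 hGr hGl h σ)
      simpa [ContinuousLinearMap.add_apply, ContinuousLinearMap.neg_apply,
        ContinuousLinearMap.mul_apply] using this
    have Eφ0 : opCos h G (Ginv (opSin (↑n * h) G (φ t₀))) +
        Ginv (opSin h G (opCos (↑n * h) G (φ t₀))) = Ginv (opSin ((↑n + 1) * h) G (φ t₀)) := by
      rw [V2 (↑n * h) (φ t₀), show h + ↑n * h = ((n:ℝ) + 1) * h by ring]
    have Fψ0 : -(G (opSin h G (opCos (↑n * h) G (ψ t₀)))) +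
        opCos h G (-(G (opSin (↑n * h) G (ψ t₀)))) = -(G (opSin ((↑n + 1) * h) G (ψ t₀))) := by
      have hK := keyK4 (G := G) h (↑n * h)
      rw [show h + ↑n * h = ((n:ℝ) + 1) * h by ring] at hK
      have := congrArg (fun L : E →L[ℂ] E => L (ψ t₀)) hK
      simpa [ContinuousLinearMap.add_apply, ContinuousLinearMap.neg_apply,
        ContinuousLinearMap.mul_apply] using this
    have Fφ0 : -(G (opSin h G (Ginv (opSin (↑n * h) G (φ t₀))))) +
        opCos h G (opCos (↑n * h) G (φ t₀)) = opCos ((↑n + 1) * h) G (φ t₀) := by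
      rw [V5 (↑n * h) (φ t₀), show h + ↑n * h = ((n:ℝ) + 1) * h by ring]
    -- per-term combination of the sums
    have hcombψ : ∀ l : ℕ,
        opCos h G (∫ τ in (0:ℝ)..h, Ginv (opSin (((n:ℝ) - l) * h - τ) G
            (m (t₀ + l * h + τ) (ψ (t₀ + l * h + τ))))) +
          Ginv (opSin h G (∫ τ in (0:ℝ)..h, opCos (((n:ℝ) - l) * h - τ) G
            (m (t₀ + l * h + τ) (ψ (t₀ + l * h + τ))))) =
        ∫ τ in (0:ℝ)..h, Ginv (opSin (((n:ℝ) + 1 - l) * h - τ) G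
            (m (t₀ + l * h + τ) (ψ (t₀ + l * h + τ)))) := by
      intro l
      have e1 := ((opCos h G).intervalIntegral_comp_comm (hSinInt (((n:ℝ) - l) * h) l)).symm
      have e2 := ((Ginv.comp (opSin h G)).intervalIntegral_comp_comm
        (hCosInt (((n:ℝ) - l) * h) l)).symm
      simp only [ContinuousLinearMap.coe_comp', Function.comp_apply] at e2
      rw [e1, e2, ← intervalIntegral.integral_add
        ((continuous_const.clm_apply (hSinCont (((n:ℝ) - l) * h) l)).intervalIntegrable _ _)
        ((continuous_const.clm_apply (continuous_const.clm_apply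
          (hCosCont (((n:ℝ) - l) * h) l))).intervalIntegrable _ _)]
      apply intervalIntegral.integral_congr
      intro τ _
      simp only [Function.comp_apply]
      rw [V2 (((n:ℝ) - l) * h - τ), show h + (((n:ℝ) - l) * h - τ) = ((n:ℝ) + 1 - l) * h - τ
        by ring]
    have hcombφ : ∀ l : ℕ,
        -(G (opSin h G (∫ τ in (0:ℝ)..h, Ginv (opSin (((n:ℝ) - l) * h - τ) G
            (m (t₀ + l * h + τ) (ψ (t₀ + l * h + τ))))))) +
          opCos h G (∫ τ in (0:ℝ)..h, opCos (((n:ℝ) - l) * h - τ) G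
            (m (t₀ + l * h + τ) (ψ (t₀ + l * h + τ)))) =
        ∫ τ in (0:ℝ)..h, opCos (((n:ℝ) + 1 - l) * h - τ) G
            (m (t₀ + l * h + τ) (ψ (t₀ + l * h + τ))) := by
      intro l
      have e1 := ((G.comp (opSin h G)).intervalIntegral_comp_comm (hSinInt (((n:ℝ) - l) * h) l)).symm
      simp only [ContinuousLinearMap.coe_comp', Function.comp_apply] at e1
      have e2 := ((opCos h G).intervalIntegral_comp_comm (hCosInt (((n:ℝ) - l) * h) l)).symm
      rw [e1, e2, ← intervalIntegral.integral_neg (E := E), ← intervalIntegral.integral_add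
        (f := fun τ => -(G (opSin h G (Ginv (opSin (((n:ℝ) - l) * h - τ) G
          (m (t₀ + l * h + τ) (ψ (t₀ + l * h + τ))))))))
        ((continuous_const.clm_apply (continuous_const.clm_apply
          (hSinCont (((n:ℝ) - l) * h) l))).neg.intervalIntegrable _ _)
        ((continuous_const.clm_apply (hCosCont (((n:ℝ) - l) * h) l)).intervalIntegrable _ _)]
      apply intervalIntegral.integral_congr
      intro τ _
      simp only [Function.comp_apply]
      rw [V5 (((n:ℝ) - l) * h - τ), show h + (((n:ℝ) - l) * h - τ) = ((n:ℝ) + 1 - l) * h - τ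
        by ring]
    have Esumψ : opCos h G (∑ l ∈ Finset.range n, ∫ τ in (0:ℝ)..h,
          Ginv (opSin (((n:ℝ) - l) * h - τ) G (m (t₀ + l * h + τ) (ψ (t₀ + l * h + τ))))) +
        Ginv (opSin h G (∑ l ∈ Finset.range n, ∫ τ in (0:ℝ)..h,
          opCos (((n:ℝ) - l) * h - τ) G (m (t₀ + l * h + τ) (ψ (t₀ + l * h + τ))))) =
        ∑ l ∈ Finset.range n, ∫ τ in (0:ℝ)..h,
          Ginv (opSin (((n:ℝ) + 1 - l) * h - τ) G (m (t₀ + l * h + τ) (ψ (t₀ + l * h + τ)))) := by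
      rw [map_sum, map_sum, map_sum, ← Finset.sum_add_distrib]
      exact Finset.sum_congr rfl fun l _ => hcombψ l
    have Esumφ : -(G (opSin h G (∑ l ∈ Finset.range n, ∫ τ in (0:ℝ)..h,
          Ginv (opSin (((n:ℝ) - l) * h - τ) G (m (t₀ + l * h + τ) (ψ (t₀ + l * h + τ))))))) +
        opCos h G (∑ l ∈ Finset.range n, ∫ τ in (0:ℝ)..h,
          opCos (((n:ℝ) - l) * h - τ) G (m (t₀ + l * h + τ) (ψ (t₀ + l * h + τ)))) =
        ∑ l ∈ Finset.range n, ∫ τ in (0:ℝ)..h,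
          opCos (((n:ℝ) + 1 - l) * h - τ) G (m (t₀ + l * h + τ) (ψ (t₀ + l * h + τ))) := by
      rw [map_sum, map_sum, map_sum, ← Finset.sum_neg_distrib, ← Finset.sum_add_distrib]
      exact Finset.sum_congr rfl fun l _ => hcombφ l
    constructor
    · push_cast
      rw [hstψ, Finset.sum_range_succ,
        show ((n:ℝ) + 1 - (n:ℝ)) = 1 by ring]
      simp only [one_mul, map_add, map_neg]
      rw [← Eψ0, ← Eφ0, ← Esumψ]
      abel
    · push_cast
      simp only [map_neg] at Fψ0
      rw [hstφ, Finset.sum_range_succ,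
        show ((n:ℝ) + 1 - (n:ℝ)) = 1 by ring]
      simp only [one_mul, map_add, map_neg, neg_add]
      rw [← Fψ0, ← Fφ0, ← Esumφ]
      abel
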